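/- Let m ≥ 1 and let G be the graph whose vertex set consists of two adjacent vertices u, v (the central pair) together with m pairs of adjacent vertices x_i, y_i (the outer pairs), where each x_i and each y_i is adjacent to both u and v, and there are no other edges. Then with 13 colors there is no winning guessing strategy on G; in particular HG(G) ≤ 12. -/

import Mathlib

/-- A winning hat-guessing strategy with `q` colors on the graph `G`: each vertex `v` has a
guessing function that depends only on the hat colors of its neighbors, and for every hat
assignment some vertex guesses its own hat color correctly. -/
def SimpleGraph.HatWinning {V : Type*} (G : SimpleGraph V) (q : ℕ) : Prop :=
  ∃ g : V → (V → Fin q) → Fin q,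
    (∀ (v : V) (h h' : V → Fin q), (∀ u, G.Adj v u → h u = h' u) → g v h = g v h') ∧
    ∀ h : V → Fin q, ∃ v, g v h = h v

/-- The hat guessing number of `G`: the largest number of colors admitting a winning strategy. -/
noncomputable def SimpleGraph.hatGuessingNumber {V : Type*} (G : SimpleGraph V) : ℕ :=
  sSup {q | G.HatWinning q}

/-- The graph consisting of a central adjacent pair `u, v` together with `m` adjacent pairs
`xᵢ, yᵢ`, where each `xᵢ` and each `yᵢ` is adjacent to both `u` and `v`, and no other edges.
The central pair is `Sum.inl false, Sum.inl true`; the `i`-th outer pair is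
`Sum.inr (i, false), Sum.inr (i, true)`. -/
def pairGraph (m : ℕ) : SimpleGraph (Bool ⊕ (Fin m × Bool)) where
  Adj a b :=
    match a, b with
    | .inl x, .inl y => x ≠ y
    | .inl _, .inr _ => True
    | .inr _, .inl _ => True
    | .inr (i, s), .inr (j, t) => i = j ∧ s ≠ t
  symm := by constructor; rintro (x | ⟨i, s⟩) (y | ⟨j, t⟩) h <;> simp_all <;> tauto
  loopless := by constructor; rintro (x | ⟨i, s⟩) h <;> simp_all

/-- Key counting lemma: given at most six "guess functions" `P k` for one member of a pair
and six `Q k` for the other, there is a pair of colors `(c, d)` (out of 13) which fools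
all of them simultaneously. -/
lemma key_count {ι : Type} [Fintype ι] (hcard : Fintype.card ι ≤ 6)
    (P Q : ι → Fin 13 → Fin 13) :
    ∃ c d : Fin 13, ∀ k, P k d ≠ c ∧ Q k c ≠ d := by
  classical
  have inner : ∀ k : ι,
      ∑ c : Fin 13, (Finset.univ.filter (fun d => P k d = c)).card = 13 := by
    intro k
    have h := Finset.card_eq_sum_card_fiberwise
      (f := P k) (s := Finset.univ) (t := Finset.univ) (fun x _ => Finset.mem_univ _)
    simpa using h.symm
  have hsum : ∑ c : Fin 13, ∑ k : ι, (Finset.univ.filter (fun d => P k d = c)).card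
      = Fintype.card ι * 13 := by
    rw [Finset.sum_comm]
    rw [Finset.sum_congr rfl (fun k _ => inner k)]
    simp [Finset.sum_const, mul_comm]
  have hex : ∃ c : Fin 13, ∑ k : ι, (Finset.univ.filter (fun d => P k d = c)).card ≤ 6 := by
    by_contra hne
    push_neg at hne
    have h91 : (91 : ℕ)
        ≤ ∑ c : Fin 13, ∑ k : ι, (Finset.univ.filter (fun d => P k d = c)).card := by
      calc (91 : ℕ) = ∑ _c : Fin 13, 7 := by simp
        _ ≤ _ := Finset.sum_le_sum (fun c _ => hne c)
    rw [hsum] at h91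
    have := Nat.mul_le_mul_right 13 hcard
    omega
  obtain ⟨c, hc6⟩ := hex
  set bad : Finset (Fin 13) :=
    (Finset.univ.filter (fun d => ∃ k, P k d = c)) ∪ (Finset.univ.image fun k => Q k c)
    with hbaddef
  have h1 : (Finset.univ.filter (fun d => ∃ k, P k d = c)).card
      ≤ ∑ k : ι, (Finset.univ.filter (fun d => P k d = c)).card := by
    refine le_trans (Finset.card_le_card ?_) (Finset.card_biUnion_le)
    intro d hd
    simp only [Finset.mem_filter, Finset.mem_univ, true_and] at hd
    obtain ⟨k, hk⟩ := hd
    exact Finset.mem_biUnion.mpr ⟨k, Finset.mem_univ _, by simp [hk]⟩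
  have h2 : (Finset.univ.image fun k => Q k c).card ≤ 6 :=
    le_trans (Finset.card_image_le) (by simpa using hcard)
  have hbad : bad.card ≤ 12 := le_trans (Finset.card_union_le _ _) (by omega)
  have hcompl : (badᶜ).Nonempty := by
    rw [← Finset.card_pos, Finset.card_compl]
    have : Fintype.card (Fin 13) = 13 := by simp
    omega
  obtain ⟨d, hd⟩ := hcompl
  rw [Finset.mem_compl, hbaddef] at hd
  simp only [Finset.mem_union, Finset.mem_filter, Finset.mem_image, Finset.mem_univ, true_and,
    not_or, not_exists] at hd
  exact ⟨c, d, fun k => ⟨hd.1 k, hd.2 k⟩⟩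

/-- A winning strategy with `q` colors yields one with any smaller positive number of colors. -/
lemma hatWinning_mono {V : Type*} (G : SimpleGraph V) {q q' : ℕ}
    (h1 : 0 < q') (hle : q' ≤ q) (hw : G.HatWinning q) : G.HatWinning q' := by
  obtain ⟨g, hc, hwin⟩ := hw
  classical
  refine ⟨fun v h => if hlt : (g v (fun u => Fin.castLE hle (h u))).val < q'
      then ⟨_, hlt⟩ else ⟨0, h1⟩, ?_, ?_⟩
  · intro v h h' hagree
    have heq : g v (fun u => Fin.castLE hle (h u)) = g v (fun u => Fin.castLE hle (h' u)) := by
      apply hc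
      intro u hu
      rw [hagree u hu]
    simp only [heq]
  · intro h
    obtain ⟨v, hv⟩ := hwin (fun u => Fin.castLE hle (h u))
    refine ⟨v, ?_⟩
    have hlt : (g v (fun u => Fin.castLE hle (h u))).val < q' := by
      rw [hv]; exact (h v).isLt
    simp only []
    rw [dif_pos hlt]
    apply Fin.ext
    simp [hv]

/-- The core adversary argument: no winning strategy with 13 colors on `pairGraph m`. -/
lemma pairGraph_main (m : ℕ) : ¬ (pairGraph m).HatWinning 13 := by
  rintro ⟨g, hc, hw⟩
  classical
  -- hat assignment builder
  set hat : Fin 13 → Fin 13 → (Fin m → Fin 13) → (Fin m → Fin 13) →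
      (Bool ⊕ (Fin m × Bool)) → Fin 13 :=
    fun a b c d w => match w with
      | .inl false => a
      | .inl true => b
      | .inr (j, false) => c j
      | .inr (j, true) => d j
    with hhat
  set ea : Fin 2 → Fin 13 := Fin.castLE (by norm_num) with hea
  set eb : Fin 3 → Fin 13 := Fin.castLE (by norm_num) with heb
  -- choose fooling colors for each outer pair
  have hsel : ∀ i : Fin m, ∃ c d : Fin 13, ∀ (k : Fin 2 × Fin 3),
      g (.inr (i, false)) (hat (ea k.1) (eb k.2) (fun _ => 0) (fun _ => d)) ≠ c ∧
      g (.inr (i, true)) (hat (ea k.1) (eb k.2) (fun _ => c) (fun _ => 0)) ≠ d := by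
    intro i
    exact key_count (by simp) _ _
  choose cvec dvec hcd using hsel
  set H : Fin 2 → Fin 3 → (Bool ⊕ (Fin m × Bool)) → Fin 13 :=
    fun a b => hat (ea a) (eb b) cvec dvec with hH
  -- guesses of the central vertices depend only on what they see
  set Gu : Fin 3 → Fin 13 := fun b => g (.inl false) (H 0 b) with hGu
  set Gv : Fin 2 → Fin 13 := fun a => g (.inl true) (H a 0) with hGv
  have hu_indep : ∀ (a : Fin 2) (b : Fin 3), g (.inl false) (H a b) = Gu b := by
    intro a b
    apply hc
    rintro (bb | ⟨j, t⟩) hadj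
    · cases bb
      · exact absurd rfl hadj
      · rfl
    · cases t <;> rfl
  have hv_indep : ∀ (a : Fin 2) (b : Fin 3), g (.inl true) (H a b) = Gv a := by
    intro a b
    apply hc
    rintro (bb | ⟨j, t⟩) hadj
    · cases bb
      · rfl
      · exact absurd rfl hadj
    · cases t <;> rfl
  -- the main disjunction: in each cell, u or v guesses correctly
  have hdisj : ∀ (a : Fin 2) (b : Fin 3), Gu b = ea a ∨ Gv a = eb b := by
    intro a b
    obtain ⟨w, hwv⟩ := hw (H a b)
    match w with
    | .inl false => exact Or.inl ((hu_indep a b).symm.trans hwv)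
    | .inl true => exact Or.inr ((hv_indep a b).symm.trans hwv)
    | .inr (i, false) =>
      exfalso
      apply (hcd i (a, b)).1
      have heq : g (.inr (i, false)) (hat (ea a) (eb b) (fun _ => 0) (fun _ => dvec i))
          = g (.inr (i, false)) (H a b) := by
        apply hc
        rintro (bb | ⟨j, t⟩) hadj
        · cases bb <;> rfl
        · have hij : i = j := hadj.1
          have hst : (false : Bool) ≠ t := hadj.2
          cases t
          · exact absurd rfl hst
          · subst hij; rfl
      exact heq.trans hwv
    | .inr (i, true) =>
      exfalso
      apply (hcd i (a, b)).2
      have heq : g (.inr (i, true)) (hat (ea a) (eb b) (fun _ => cvec i) (fun _ => 0))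
          = g (.inr (i, true)) (H a b) := by
        apply hc
        rintro (bb | ⟨j, t⟩) hadj
        · cases bb <;> rfl
        · have hij : i = j := hadj.1
          have hst : (true : Bool) ≠ t := hadj.2
          cases t
          · subst hij; rfl
          · exact absurd rfl hst
      exact heq.trans hwv
  -- for each b, pick a fooling u
  set s : Fin 3 → Fin 2 := fun b => if Gu b = ea 0 then 1 else 0 with hs
  have hsprop : ∀ b, Gu b ≠ ea (s b) := by
    intro b
    by_cases h0 : Gu b = ea 0
    · simp only [hs, if_pos h0]
      rw [h0]
      decide
    · simp only [hs, if_neg h0]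
      exact h0
  have hGvb : ∀ b, Gv (s b) = eb b := fun b =>
    (hdisj (s b) b).resolve_left (hsprop b)
  -- pigeonhole on s
  obtain ⟨b, b', hne, hbb⟩ := Fintype.exists_ne_map_eq_of_card_lt s (by simp)
  apply hne
  have : eb b = eb b' := by rw [← hGvb b, ← hGvb b', hbb]
  exact Fin.castLE_injective _ this

/-- For every `m ≥ 1`, the graph consisting of a central adjacent pair and
`m` outer adjacent pairs (each outer vertex adjacent to both central vertices) has no winning
guessing strategy with 13 colors; in particular its hat guessing number is at most 12. -/
theorem pairGraph_not_hatWinning_thirteen (m : ℕ) (hm : 1 ≤ m) :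
    ¬ (pairGraph m).HatWinning 13 ∧ (pairGraph m).hatGuessingNumber ≤ 12 := by
  refine ⟨pairGraph_main m, ?_⟩
  apply csSup_le'
  intro q hq
  by_contra hgt
  push_neg at hgt
  exact pairGraph_main m
    (hatWinning_mono _ (by norm_num) (by omega : 13 ≤ q) hq)
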